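/- For every finite set M of points in the plane in general position, there exists a finite set B with |B| ≤ 2|M| such that B is disjoint from M, the set M ∪ B is in general position, and for every three distinct points a, b, c ∈ M the topological interior of convexHull{a, b, c} contains a point of B. -/

import Mathlib

open Set

/-- A set of points in the plane is in general position if no three distinct
points of it are collinear. -/
def GenPos (S : Set (ℝ × ℝ)) : Prop :=
  ∀ p ∈ S, ∀ q ∈ S, ∀ r ∈ S, p ≠ q → p ≠ r → q ≠ r →
    ¬ Collinear ℝ ({p, q, r} : Set (ℝ × ℝ))

namespace BreakerAux

def X (u v : ℝ × ℝ) : ℝ := u.1 * v.2 - u.2 * v.1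

lemma X_swap (u v : ℝ × ℝ) : X v u = - X u v := by simp [X]; ring
lemma X_self (u : ℝ × ℝ) : X u u = 0 := by simp [X]; ring
lemma X_offset1 (y z p w : ℝ × ℝ) (ε : ℝ) :
    X (y - (p + ε • w)) (z - (p + ε • w)) =
      X (y - p) (z - p) + ε * (-(X (y - p) w + X w (z - p))) := by
  simp [X, Prod.smul_fst, Prod.smul_snd, smul_eq_mul]; ring
lemma X_offset2 (q w' p w : ℝ × ℝ) (ε : ℝ) :
    X w' ((p + ε • w) - q) = X w' (p - q) + ε * X w' w := by
  simp [X, smul_eq_mul]; ring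

lemma exists_t_of_cross_zero {u v : ℝ × ℝ} (hu : u ≠ 0) (h : X u v = 0) :
    ∃ t : ℝ, v = t • u := by
  have hu' : u.1 ≠ 0 ∨ u.2 ≠ 0 := by
    by_contra hc; push_neg at hc; exact hu (Prod.ext hc.1 hc.2)
  rcases hu' with h1 | h2
  · refine ⟨v.1 / u.1, Prod.ext ?_ ?_⟩ <;> simp [smul_eq_mul]
    · field_simp
    · field_simp; simp [X] at h; nlinarith [h]
  · refine ⟨v.2 / u.2, Prod.ext ?_ ?_⟩ <;> simp [smul_eq_mul]
    · field_simp; simp [X] at h; nlinarith [h]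
    · field_simp

lemma collinear_iff_cross (x y z : ℝ × ℝ) :
    Collinear ℝ ({x, y, z} : Set (ℝ × ℝ)) ↔ X (y - x) (z - x) = 0 := by
  constructor
  · intro h
    rw [collinear_iff_of_mem (Set.mem_insert x {y, z})] at h
    obtain ⟨v, hv⟩ := h
    obtain ⟨r, hr⟩ := hv y (by simp)
    obtain ⟨t, ht⟩ := hv z (by simp)
    have : y - x = r • v := by simp [hr]
    have h2 : z - x = t • v := by simp [ht]
    rw [this, h2]; simp [X, smul_eq_mul]; ring
  · intro h
    by_cases hyx : y = x
    · subst hyx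
      rw [Set.insert_idem]
      exact collinear_pair ℝ y z
    · have hv : y - x ≠ 0 := sub_ne_zero.mpr hyx
      obtain ⟨t, ht⟩ := exists_t_of_cross_zero hv h
      rw [collinear_iff_of_mem (Set.mem_insert x {y, z})]
      refine ⟨y - x, fun p hp => ?_⟩
      rcases hp with rfl | rfl | rfl
      · exact ⟨0, by simp⟩
      · exact ⟨1, by simp⟩
      · exact ⟨t, by rw [← ht]; simp⟩

lemma finite_root {A B : ℝ} (h : ¬(A = 0 ∧ B = 0)) : {ε : ℝ | A + ε * B = 0}.Finite := by
  by_cases hB : B = 0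
  · subst hB
    have hA : A ≠ 0 := fun hA => h ⟨hA, rfl⟩
    convert Set.finite_empty
    ext ε; simp [hA]
  · apply Set.Finite.subset (Set.finite_singleton (-A / B))
    intro ε hε
    simp only [Set.mem_setOf_eq] at hε
    simp only [Set.mem_singleton_iff]
    field_simp
    linarith

lemma range_triple (a b c : ℝ × ℝ) : Set.range ![a, b, c] = {a, b, c} := by
  ext x
  constructor
  · rintro ⟨i, rfl⟩; fin_cases i <;> simp
  · rintro (rfl | rfl | rfl)
    exacts [⟨0, rfl⟩, ⟨1, rfl⟩, ⟨2, rfl⟩]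

lemma mem_interior_triangle {a b c : ℝ × ℝ}
    (h : ¬ Collinear ℝ ({a, b, c} : Set (ℝ × ℝ)))
    {α β γ : ℝ} (hα : 0 < α) (hβ : 0 < β) (hγ : 0 < γ) (hsum : α + β + γ = 1) :
    α • a + β • b + γ • c ∈ interior (convexHull ℝ ({a, b, c} : Set (ℝ × ℝ))) := by
  have hind : AffineIndependent ℝ ![a, b, c] :=
    affineIndependent_iff_not_collinear_set.2 h
  have htot : affineSpan ℝ (Set.range ![a, b, c]) = ⊤ := by
    rw [hind.affineSpan_eq_top_iff_card_eq_finrank_add_one]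
    simp
  let bas : AffineBasis (Fin 3) ℝ (ℝ × ℝ) := ⟨![a, b, c], hind, htot⟩
  have hbas : Set.range (bas : Fin 3 → ℝ × ℝ) = {a, b, c} := range_triple a b c
  rw [← hbas, bas.interior_convexHull]
  have hw : ∑ i : Fin 3, ![α, β, γ] i = 1 := by simp [Fin.sum_univ_three]; linarith
  have hcomb : Finset.univ.affineCombination ℝ ![a, b, c] ![α, β, γ]
      = α • a + β • b + γ • c := by
    rw [Finset.affineCombination_eq_linear_combination _ _ _ hw]
    simp [Fin.sum_univ_three]
  intro i
  have : bas.coord i (α • a + β • b + γ • c) = ![α, β, γ] i := by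
    rw [← hcomb]
    exact bas.coord_apply_combination_of_mem (Finset.mem_univ i) hw
  rw [this]
  fin_cases i <;> simpa


lemma X_zero_left (v : ℝ × ℝ) : X 0 v = 0 := by simp [X]
lemma X_zero_right (v : ℝ × ℝ) : X v 0 = 0 := by simp [X]
lemma X_smul_right (u v : ℝ × ℝ) (t : ℝ) : X u (t • v) = t * X u v := by
  simp [X, smul_eq_mul]; ring

lemma X_neg_left (u v : ℝ × ℝ) : X (-u) v = - X u v := by simp [X]; ring
lemma X_neg_right (u v : ℝ × ℝ) : X u (-v) = - X u v := by simp [X]; ring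

lemma X_add_smul_left (a b u : ℝ × ℝ) (δ : ℝ) :
    X (a + δ • b) u = X a u + δ * X b u := by simp [X, smul_eq_mul]; ring
lemma X_add_smul_right (u a b : ℝ × ℝ) (δ : ℝ) :
    X u (a + δ • b) = X u a + δ * X u b := by simp [X, smul_eq_mul]; ring

lemma cone_decomp {u v : ℝ × ℝ} (hD : X u v ≠ 0) (w : ℝ × ℝ) :
    w = (X w v / X u v) • u + (X u w / X u v) • v := by
  have h : u.1 * v.2 - u.2 * v.1 ≠ 0 := hD
  have h' : v.2 * u.1 - v.1 * u.2 ≠ 0 := by intro e; apply h; linarith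
  apply Prod.ext <;> simp [X, smul_eq_mul] <;> field_simp <;> ring

lemma eventually_pos_aff {A B : ℝ} (h : 0 < A) :
    ∀ᶠ δ in nhds (0 : ℝ), 0 < A + δ * B := by
  have ht : Filter.Tendsto (fun δ : ℝ => A + δ * B) (nhds 0) (nhds A) :=
    Continuous.tendsto' (by continuity) 0 A (by ring)
  exact ht.eventually_const_lt h

lemma eventually_ne_aff {A B : ℝ} (h : A ≠ 0) :
    ∀ᶠ δ in nhds (0 : ℝ), A + δ * B ≠ 0 := by
  have ht : Filter.Tendsto (fun δ : ℝ => A + δ * B) (nhds 0) (nhds A) :=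
    Continuous.tendsto' (by continuity) 0 A (by ring)
  exact ht.eventually_ne h

lemma key_lemma {a p c2 w : ℝ × ℝ} (hcol : ¬ Collinear ℝ ({a, p, c2} : Set (ℝ × ℝ)))
    (hs : 0 < X w (c2 - p) / X (a - p) (c2 - p))
    (hr : 0 < X (a - p) w / X (a - p) (c2 - p)) :
    ∃ C : ℝ, 0 < C ∧ ∀ ε : ℝ, 0 < ε → ε < C →
      p + ε • w ∈ interior (convexHull ℝ ({a, p, c2} : Set (ℝ × ℝ))) := by
  have hcol' : ¬ Collinear ℝ ({p, a, c2} : Set (ℝ × ℝ)) := by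
    rw [Set.insert_comm]; exact hcol
  have hD : X (a - p) (c2 - p) ≠ 0 := by
    intro h; exact hcol' ((collinear_iff_cross p a c2).2 h)
  set s := X w (c2 - p) / X (a - p) (c2 - p) with hsdef
  set r := X (a - p) w / X (a - p) (c2 - p) with hrdef
  have hdec : w = s • (a - p) + r • (c2 - p) := cone_decomp hD w
  have hs' : 0 < s := hs
  have hr' : 0 < r := hr
  refine ⟨1 / (s + r), by positivity, fun ε hε0 hεC => ?_⟩
  have hsum : ε * s + ε * r < 1 := by
    have h1 : ε * (s + r) < (1 / (s + r)) * (s + r) := by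
      apply mul_lt_mul_of_pos_right hεC; positivity
    rw [one_div_mul_cancel (by positivity : s + r ≠ 0)] at h1
    nlinarith
  have hpt : p + ε • w = (ε * s) • a + (1 - ε * s - ε * r) • p + (ε * r) • c2 := by
    rw [hdec]; module
  rw [hpt]
  exact mem_interior_triangle hcol (by positivity) (by nlinarith) (by positivity) (by ring)

lemma seq_choice (c : (ℝ × ℝ) × (ℝ × ℝ) → ℝ) :
    ∀ (L : List ((ℝ × ℝ) × (ℝ × ℝ))) (S : Finset (ℝ × ℝ)),
      GenPos ↑S →
      (∀ s ∈ L, 0 < c s) →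
      (∀ s ∈ L, s.1 ∈ S) →
      (∀ s ∈ L, s.2 ≠ 0 ∧ ∀ q ∈ S, q ≠ s.1 → X s.2 (q - s.1) ≠ 0) →
      L.Pairwise (fun s s' => s.1 = s'.1 → X s.2 s'.2 ≠ 0) →
      ∃ B : Finset (ℝ × ℝ),
        B.card ≤ L.length ∧
        Disjoint (B : Set (ℝ × ℝ)) (S : Set (ℝ × ℝ)) ∧
        GenPos ((S : Set (ℝ × ℝ)) ∪ ↑B) ∧
        ∀ s ∈ L, ∃ ε : ℝ, 0 < ε ∧ ε < c s ∧ s.1 + ε • s.2 ∈ B := by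
  intro L
  induction L with
  | nil =>
    intro S hS _ _ _ _
    exact ⟨∅, by simp, by simp, by simpa using hS, by simp⟩
  | cons hd T ih =>
    obtain ⟨p, w⟩ := hd
    intro S hS hc hpts h3 h4
    have hw0 : w ≠ 0 := (h3 (p, w) (List.mem_cons_self)).1
    have hline : ∀ q ∈ (S : Set (ℝ × ℝ)), q ≠ p → X w (q - p) ≠ 0 := by
      intro q hq; exact (h3 (p, w) (List.mem_cons_self)).2 q hq
    have hpS : p ∈ S := hpts (p, w) (List.mem_cons_self)
    have hcpw : 0 < c (p, w) := hc (p, w) (List.mem_cons_self)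
    -- bad parameter sets
    have hfin1 : (⋃ y ∈ (S : Set (ℝ × ℝ)), ⋃ z ∈ (S : Set (ℝ × ℝ)),
        {ε : ℝ | y ≠ z ∧
          X (y - p) (z - p) + ε * (-(X (y - p) w + X w (z - p))) = 0}).Finite := by
      apply Set.Finite.biUnion S.finite_toSet
      intro y hy
      apply Set.Finite.biUnion S.finite_toSet
      intro z hz
      by_cases hyz : y = z
      · convert Set.finite_empty
        ext ε; simp [hyz]
      · apply Set.Finite.subset (finite_root (A := X (y - p) (z - p))
          (B := -(X (y - p) w + X w (z - p))) ?_)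
        · intro ε hε; exact hε.2
        · rintro ⟨hA, hB⟩
          by_cases hyp : y = p
          · subst hyp
            have hzp : z ≠ y := fun h => hyz h.symm
            have hz' : X w (z - y) ≠ 0 := hline z hz (fun h => hyz h.symm)
            apply hz'
            have h0 : X (y - y) w = 0 := by simp [X]
            rw [sub_self, X_zero_left] at hB
            linarith
          · by_cases hzp : z = p
            · subst hzp
              have hy' : X w (y - z) ≠ 0 := hline y hy hyp
              apply hy'
              rw [sub_self, X_zero_right] at hB
              rw [X_swap]
              linarith
            · exact hS p hpS y hy z hz (fun h => hyp h.symm) (fun h => hzp h.symm)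
                hyz ((collinear_iff_cross p y z).2 hA)
    have hfin2 : (⋃ s ∈ {s | s ∈ T}, {ε : ℝ | X s.2 (p - s.1) + ε * X s.2 w = 0}).Finite := by
      apply Set.Finite.biUnion T.finite_toSet
      intro s hsT
      apply finite_root
      rintro ⟨hA, hB⟩
      by_cases hpq : p = s.1
      · have hXww : X w s.2 ≠ 0 := (List.pairwise_cons.1 h4).1 s hsT hpq
        apply hXww
        rw [X_swap] at hB
        linarith
      · exact (h3 s (List.mem_cons_of_mem _ hsT)).2 p hpS hpq hA
    -- choose ε
    have hinf : (Set.Ioo (0:ℝ) (c (p, w))).Infinite := Set.Ioo_infinite hcpw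
    obtain ⟨ε, hεmem⟩ := (hinf.diff (hfin1.union hfin2)).nonempty
    have hεI : ε ∈ Set.Ioo (0:ℝ) (c (p, w)) := hεmem.1
    have hεbad : ε ∉ _ := hεmem.2
    obtain ⟨hε0, hεc⟩ := hεI
    set x : ℝ × ℝ := p + ε • w with hxdef
    have hεbad1 : ∀ y ∈ (S : Set (ℝ × ℝ)), ∀ z ∈ (S : Set (ℝ × ℝ)), y ≠ z →
        X (y - x) (z - x) ≠ 0 := by
      intro y hy z hz hyz hXeq
      apply hεbad
      apply Set.mem_union_left
      refine Set.mem_biUnion hy (Set.mem_biUnion hz ⟨hyz, ?_⟩)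
      rw [← X_offset1]
      exact hXeq
    have hεbad2 : ∀ s ∈ T, X s.2 (x - s.1) ≠ 0 := by
      intro s hsT hXeq
      apply hεbad
      apply Set.mem_union_right
      refine Set.mem_biUnion hsT ?_
      rw [Set.mem_setOf_eq, ← X_offset2]
      exact hXeq
    have hxS : x ∉ S := by
      intro hx
      by_cases hxp : x = p
      · have hε' : ε • w = 0 := by
          have := hxp; rw [hxdef] at this
          simpa using this
        rcases smul_eq_zero.1 hε' with h | h
        · exact absurd h (ne_of_gt hε0)
        · exact hw0 h
      · apply hline x hx hxp
        have : x - p = ε • w := by rw [hxdef]; abel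
        rw [this, X_smul_right, X_self, mul_zero]
    have hkey : ∀ y ∈ (S : Set (ℝ × ℝ)), ∀ z ∈ (S : Set (ℝ × ℝ)), y ≠ z →
        ¬ Collinear ℝ ({x, y, z} : Set (ℝ × ℝ)) := by
      intro y hy z hz hyz hcol
      exact hεbad1 y hy z hz hyz ((collinear_iff_cross x y z).1 hcol)
    have hGP : GenPos ↑(insert x S) := by
      intro p' hp' q' hq' r' hr' h12 h13 h23
      rw [Finset.coe_insert, Set.mem_insert_iff] at hp' hq' hr'
      rcases hp' with rfl | hp'
      · rcases hq' with rfl | hq'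
        · exact absurd rfl h12
        · rcases hr' with rfl | hr'
          · exact absurd rfl h13
          · exact hkey q' hq' r' hr' h23
      · rcases hq' with rfl | hq'
        · rcases hr' with rfl | hr'
          · exact absurd rfl h23
          · rw [Set.insert_comm]
            exact hkey p' hp' r' hr' h13
        · rcases hr' with rfl | hr'
          · have hset : ({p', q', x} : Set (ℝ × ℝ)) = {x, p', q'} := by
              ext u; simp; tauto
            rw [hset]
            exact hkey p' hp' q' hq' h12
          · exact hS p' hp' q' hq' r' hr' h12 h13 h23
    -- apply IH
    obtain ⟨B', hcard', hdisj', hgp', hslots'⟩ := ih (insert x S) hGP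
      (fun s hs => hc s (List.mem_cons_of_mem _ hs))
      (fun s hs => Finset.mem_insert_of_mem (hpts s (List.mem_cons_of_mem _ hs)))
      (by
        intro s hs
        refine ⟨(h3 s (List.mem_cons_of_mem _ hs)).1, ?_⟩
        intro q hq hqs
        rcases Finset.mem_insert.1 hq with rfl | hq'
        · exact hεbad2 s hs
        · exact (h3 s (List.mem_cons_of_mem _ hs)).2 q hq' hqs)
      ((List.pairwise_cons.1 h4).2)
    refine ⟨insert x B', ?_, ?_, ?_, ?_⟩
    · calc (insert x B').card ≤ B'.card + 1 := Finset.card_insert_le _ _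
        _ ≤ T.length + 1 := by omega
        _ = ((p, w) :: T).length := by simp
    · rw [Finset.coe_insert, Set.disjoint_left]
      rintro a (rfl | ha) haS
      · exact hxS haS
      · exact Set.disjoint_left.1 hdisj' ha
          (by simp only [Finset.coe_insert, Set.mem_insert_iff]; exact Or.inr haS)
    · have hsets : ((S : Set (ℝ × ℝ)) ∪ ↑(insert x B'))
          = (↑(insert x S) ∪ ↑B' : Set (ℝ × ℝ)) := by
        simp only [Finset.coe_insert]
        ext u; simp; tauto
      rw [hsets]
      exact hgp'
    · intro s hs
      rcases List.mem_cons.1 hs with rfl | hs'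
      · exact ⟨ε, hε0, hεc, Finset.mem_insert_self _ _⟩
      · obtain ⟨ε', h1, h2, h3'⟩ := hslots' s hs'
        exact ⟨ε', h1, h2, Finset.mem_insert_of_mem h3'⟩


end BreakerAux

open BreakerAux in
set_option maxHeartbeats 1000000 in
theorem breaker_blocks_all_triangles (M : Finset (ℝ × ℝ)) (hgp : GenPos ↑M) :
    ∃ B : Finset (ℝ × ℝ), B.card ≤ 2 * M.card ∧
      Disjoint (B : Set (ℝ × ℝ)) (M : Set (ℝ × ℝ)) ∧
      GenPos ((M : Set (ℝ × ℝ)) ∪ ↑B) ∧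
      ∀ a ∈ M, ∀ b ∈ M, ∀ c ∈ M, a ≠ b → a ≠ c → b ≠ c →
        ∃ x ∈ B, x ∈ interior (convexHull ℝ ({a, b, c} : Set (ℝ × ℝ))) := by
  classical
  -- Step 1: choose t making the linear functional x ↦ x.1 + t * x.2 injective on M
  have hbadt : (⋃ p ∈ (M : Set (ℝ × ℝ)), ⋃ q ∈ (M : Set (ℝ × ℝ)),
      {t : ℝ | p ≠ q ∧ (q.1 - p.1) + t * (q.2 - p.2) = 0}).Finite := by
    apply Set.Finite.biUnion M.finite_toSet
    intro p hp
    apply Set.Finite.biUnion M.finite_toSet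
    intro q hq
    by_cases hpq : p = q
    · convert Set.finite_empty
      ext u; simp [hpq]
    · refine Set.Finite.subset (finite_root (A := q.1 - p.1) (B := q.2 - p.2) ?_)
        (fun u hu => by simpa using hu.2)
      rintro ⟨h1, h2⟩
      exact hpq (Prod.ext (by linarith) (by linarith)).symm
  obtain ⟨t, htmem⟩ := ((Set.Ioo_infinite (zero_lt_one (α := ℝ))).diff hbadt).nonempty
  have ht : ∀ p ∈ M, ∀ q ∈ M, p ≠ q → (q.1 - p.1) + t * (q.2 - p.2) ≠ 0 := by
    intro p hp q hq hpq h0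
    exact htmem.2 (Set.mem_biUnion hp (Set.mem_biUnion hq ⟨hpq, h0⟩))
  -- Step 2: vertical direction w1
  set w1 : ℝ × ℝ := (-t, 1) with hw1def
  have hw1ne : w1 ≠ 0 := by simp [hw1def, Prod.ext_iff]
  have hXw1 : ∀ p q : ℝ × ℝ, X w1 (q - p) = -((q.1 - p.1) + t * (q.2 - p.2)) := by
    intro p q; simp [X, hw1def]; ring
  have hw1M : ∀ p ∈ M, ∀ q ∈ M, q ≠ p → X w1 (q - p) ≠ 0 := by
    intro p hp q hq hqp h
    rw [hXw1] at h
    exact ht p hp q hq (fun e => hqp e.symm) (by linarith)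
  -- Step 3: choose δ and the second direction w2
  set e1 : ℝ × ℝ := (1, 0) with he1def
  have hδev1 : ∀ᶠ δ in nhds (0 : ℝ), ∀ p ∈ M, ∀ q ∈ M, q ≠ p →
      X (-w1 + δ • e1) (q - p) ≠ 0 := by
    rw [Filter.eventually_all_finset]
    intro p hp
    rw [Filter.eventually_all_finset]
    intro q hq
    by_cases hqp : q = p
    · exact Filter.Eventually.of_forall (fun δ h => absurd hqp h)
    · have hA : X (-w1) (q - p) ≠ 0 := by
        rw [X_neg_left]; exact neg_ne_zero.2 (hw1M p hp q hq hqp)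
      exact (eventually_ne_aff (B := X e1 (q - p)) hA).mono
        (fun δ h _ => by rw [X_add_smul_left]; exact h)
  have hδev2 : ∀ᶠ δ in nhds (0 : ℝ), ∀ a ∈ M, ∀ b ∈ M, ∀ c2 ∈ M,
      X w1 (c2 - b) / X (a - b) (c2 - b) < 0 →
      X (a - b) w1 / X (a - b) (c2 - b) < 0 →
      (0 < X (-w1 + δ • e1) (c2 - b) / X (a - b) (c2 - b) ∧
       0 < X (a - b) (-w1 + δ • e1) / X (a - b) (c2 - b)) := by
    rw [Filter.eventually_all_finset]
    intro a ha
    rw [Filter.eventually_all_finset]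
    intro b hb
    rw [Filter.eventually_all_finset]
    intro c2 hc2
    by_cases H : X w1 (c2 - b) / X (a - b) (c2 - b) < 0 ∧
        X (a - b) w1 / X (a - b) (c2 - b) < 0
    · have h1 : 0 < X (-w1) (c2 - b) / X (a - b) (c2 - b) := by
        rw [X_neg_left, neg_div]; linarith [H.1]
      have h2 : 0 < X (a - b) (-w1) / X (a - b) (c2 - b) := by
        rw [X_neg_right, neg_div]; linarith [H.2]
      refine ((eventually_pos_aff (B := X e1 (c2 - b) / X (a - b) (c2 - b)) h1).and
        (eventually_pos_aff (B := X (a - b) e1 / X (a - b) (c2 - b)) h2)).mono ?_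
      intro δ hδ _ _
      constructor
      · rw [X_add_smul_left, add_div, mul_div_assoc]; exact hδ.1
      · rw [X_add_smul_right, add_div, mul_div_assoc]; exact hδ.2
    · exact Filter.Eventually.of_forall (fun δ h1 h2 => absurd ⟨h1, h2⟩ H)
  have hδex := (((hδev1.and hδev2).filter_mono nhdsWithin_le_nhds).and
    (eventually_mem_nhdsWithin (a := (0:ℝ)) (s := Set.Ioi 0))).exists
  obtain ⟨δ, ⟨hδ1, hδ2⟩, hδpos⟩ := hδex
  rw [Set.mem_Ioi] at hδpos
  set w2 : ℝ × ℝ := -w1 + δ • e1 with hw2def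
  have hXw1e1 : X w1 e1 = -1 := by simp [X, hw1def, he1def]
  have hw12 : X w1 w2 ≠ 0 := by
    rw [hw2def, X_add_smul_right, X_neg_right, X_self, hXw1e1]
    simp
    exact ne_of_gt hδpos
  have hw2ne : w2 ≠ 0 := fun h => hw12 (by rw [h, X_zero_right])
  -- sign dichotomy for the vertical direction
  have hsign : ∀ a ∈ M, ∀ b ∈ M, ∀ c2 ∈ M, a ≠ b → c2 ≠ b → a ≠ c2 →
      a.1 + t * a.2 < b.1 + t * b.2 → b.1 + t * b.2 < c2.1 + t * c2.2 →
      (0 < X w1 (c2 - b) / X (a - b) (c2 - b) ∧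
       0 < X (a - b) w1 / X (a - b) (c2 - b)) ∨
      (X w1 (c2 - b) / X (a - b) (c2 - b) < 0 ∧
       X (a - b) w1 / X (a - b) (c2 - b) < 0) := by
    intro a ha b hb c2 hc2 hab hcb hac hfab hfbc
    have hD : X (a - b) (c2 - b) ≠ 0 := by
      intro h
      exact hgp b hb a ha c2 hc2 (fun e => hab e.symm) (fun e => hcb e.symm) hac
        ((collinear_iff_cross b a c2).2 h)
    set s := X w1 (c2 - b) / X (a - b) (c2 - b) with hsdef
    set r := X (a - b) w1 / X (a - b) (c2 - b) with hrdef
    have hdec : w1 = s • (a - b) + r • (c2 - b) := cone_decomp hD w1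
    have hA : (a - b).1 + t * (a - b).2 = (a.1 + t * a.2) - (b.1 + t * b.2) := by
      simp; ring
    have hB : (c2 - b).1 + t * (c2 - b).2 = (c2.1 + t * c2.2) - (b.1 + t * b.2) := by
      simp; ring
    have hlin : w1.1 + t * w1.2 =
        s * ((a - b).1 + t * (a - b).2) + r * ((c2 - b).1 + t * (c2 - b).2) := by
      rw [hdec]; simp; ring
    have hw1fv : w1.1 + t * w1.2 = 0 := by simp [hw1def]
    rw [hw1fv, hA, hB] at hlin
    have hAneg : (a.1 + t * a.2) - (b.1 + t * b.2) < 0 := by linarith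
    have hBpos : 0 < (c2.1 + t * c2.2) - (b.1 + t * b.2) := by linarith
    rcases lt_trichotomy r 0 with hr | hr | hr
    · right
      refine ⟨?_, hr⟩
      nlinarith
    · exfalso
      rw [hr] at hlin
      have hs0 : s = 0 := by
        rcases mul_eq_zero.1 (by linarith : s * ((a.1 + t * a.2) - (b.1 + t * b.2)) = 0) with h | h
        · exact h
        · linarith
      apply hw1ne
      rw [hdec, hs0, hr]
      simp
    · left
      refine ⟨?_, hr⟩
      nlinarith
  -- per-slot smallness bound via interior membership
  have key2 : ∀ pw : (ℝ × ℝ) × (ℝ × ℝ), ∃ C : ℝ, 0 < C ∧ ∀ ε : ℝ, 0 < ε → ε < C →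
      ∀ a ∈ M, ∀ c2 ∈ M, pw.1 ∈ M → a ≠ pw.1 → c2 ≠ pw.1 → a ≠ c2 →
      0 < X pw.2 (c2 - pw.1) / X (a - pw.1) (c2 - pw.1) →
      0 < X (a - pw.1) pw.2 / X (a - pw.1) (c2 - pw.1) →
      pw.1 + ε • pw.2 ∈ interior (convexHull ℝ ({a, pw.1, c2} : Set (ℝ × ℝ))) := by
    intro pw
    have hev : ∀ᶠ ε in nhdsWithin (0:ℝ) (Set.Ioi 0), ∀ a ∈ M, ∀ c2 ∈ M,
        pw.1 ∈ M → a ≠ pw.1 → c2 ≠ pw.1 → a ≠ c2 →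
        0 < X pw.2 (c2 - pw.1) / X (a - pw.1) (c2 - pw.1) →
        0 < X (a - pw.1) pw.2 / X (a - pw.1) (c2 - pw.1) →
        pw.1 + ε • pw.2 ∈ interior (convexHull ℝ ({a, pw.1, c2} : Set (ℝ × ℝ))) := by
      rw [Filter.eventually_all_finset]
      intro a ha
      rw [Filter.eventually_all_finset]
      intro c2 hc2
      by_cases H : pw.1 ∈ M ∧ a ≠ pw.1 ∧ c2 ≠ pw.1 ∧ a ≠ c2 ∧
          0 < X pw.2 (c2 - pw.1) / X (a - pw.1) (c2 - pw.1) ∧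
          0 < X (a - pw.1) pw.2 / X (a - pw.1) (c2 - pw.1)
      · obtain ⟨h1, h2, h3, h4, h5, h6⟩ := H
        have hcol : ¬ Collinear ℝ ({a, pw.1, c2} : Set (ℝ × ℝ)) :=
          hgp a ha pw.1 h1 c2 hc2 h2 h4 (fun e => h3 e.symm)
        obtain ⟨C, hC, hCp⟩ := key_lemma hcol h5 h6
        have hmem : Set.Ioo (0:ℝ) C ∈ nhdsWithin (0:ℝ) (Set.Ioi 0) :=
          Ioo_mem_nhdsGT_of_mem ⟨le_refl 0, hC⟩
        exact Filter.eventually_of_mem hmem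
          (fun ε hε _ _ _ _ _ _ => hCp ε hε.1 hε.2)
      · exact Filter.Eventually.of_forall
          (fun ε h1 h2 h3 h4 h5 h6 => absurd ⟨h1, h2, h3, h4, h5, h6⟩ H)
    obtain ⟨u, hu, hsub⟩ :=
      (mem_nhdsGT_iff_exists_Ioo_subset' (zero_lt_one (α := ℝ))).1 hev
    exact ⟨u, hu, fun ε hε0 hεu => hsub ⟨hε0, hεu⟩⟩
  set cfun : (ℝ × ℝ) × (ℝ × ℝ) → ℝ := fun pw => (key2 pw).choose with hcdef
  have hcpos : ∀ pw, 0 < cfun pw := fun pw => (key2 pw).choose_spec.1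
  have hcprop : ∀ pw, ∀ ε : ℝ, 0 < ε → ε < cfun pw →
      ∀ a ∈ M, ∀ c2 ∈ M, pw.1 ∈ M → a ≠ pw.1 → c2 ≠ pw.1 → a ≠ c2 →
      0 < X pw.2 (c2 - pw.1) / X (a - pw.1) (c2 - pw.1) →
      0 < X (a - pw.1) pw.2 / X (a - pw.1) (c2 - pw.1) →
      pw.1 + ε • pw.2 ∈ interior (convexHull ℝ ({a, pw.1, c2} : Set (ℝ × ℝ))) :=
    fun pw => (key2 pw).choose_spec.2
  -- the slot list
  set L : List ((ℝ × ℝ) × (ℝ × ℝ)) :=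
    M.toList.map (fun p => (p, w1)) ++ M.toList.map (fun p => (p, w2)) with hLdef
  have hLlen : L.length = 2 * M.card := by
    simp [hLdef]
    ring
  have hLpts : ∀ s ∈ L, s.1 ∈ M := by
    intro s hs
    rw [hLdef, List.mem_append] at hs
    rcases hs with hs | hs <;>
      · obtain ⟨p, hp, rfl⟩ := List.mem_map.1 hs
        simpa using (Finset.mem_toList).1 hp
  have hL3 : ∀ s ∈ L, s.2 ≠ 0 ∧ ∀ q ∈ M, q ≠ s.1 → X s.2 (q - s.1) ≠ 0 := by
    intro s hs
    rw [hLdef, List.mem_append] at hs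
    rcases hs with hs | hs
    · obtain ⟨p, hp, rfl⟩ := List.mem_map.1 hs
      exact ⟨hw1ne, fun q hq hqp => hw1M p (by simpa using (Finset.mem_toList).1 hp) q hq hqp⟩
    · obtain ⟨p, hp, rfl⟩ := List.mem_map.1 hs
      exact ⟨hw2ne, fun q hq hqp => hδ1 p (by simpa using (Finset.mem_toList).1 hp) q hq hqp⟩
  have hL4 : L.Pairwise (fun s s' => s.1 = s'.1 → X s.2 s'.2 ≠ 0) := by
    rw [hLdef, List.pairwise_append]
    refine ⟨?_, ?_, ?_⟩
    · rw [List.pairwise_map]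
      exact M.nodup_toList.imp (fun hne heq => absurd heq hne)
    · rw [List.pairwise_map]
      exact M.nodup_toList.imp (fun hne heq => absurd heq hne)
    · intro s hs s' hs'
      obtain ⟨p, hp, rfl⟩ := List.mem_map.1 hs
      obtain ⟨q, hq, rfl⟩ := List.mem_map.1 hs'
      intro _
      exact hw12
  obtain ⟨B, hBcard, hBdisj, hBgp, hBslots⟩ :=
    seq_choice cfun L M hgp (fun s _ => hcpos s) hLpts hL3 hL4
  have hslotmem : ∀ p ∈ M, (p, w1) ∈ L ∧ (p, w2) ∈ L := by
    intro p hp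
    constructor
    · rw [hLdef, List.mem_append]
      exact Or.inl (List.mem_map.2 ⟨p, (Finset.mem_toList).2 hp, rfl⟩)
    · rw [hLdef, List.mem_append]
      exact Or.inr (List.mem_map.2 ⟨p, (Finset.mem_toList).2 hp, rfl⟩)
  -- main blocking statement for sorted triples
  have main : ∀ a' ∈ M, ∀ b' ∈ M, ∀ c' ∈ M,
      a'.1 + t * a'.2 < b'.1 + t * b'.2 → b'.1 + t * b'.2 < c'.1 + t * c'.2 →
      ∃ x ∈ B, x ∈ interior (convexHull ℝ ({a', b', c'} : Set (ℝ × ℝ))) := by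
    intro a' ha b' hb c' hc h1 h2
    have hab : a' ≠ b' := fun h => by rw [h] at h1; exact lt_irrefl _ h1
    have hcb : c' ≠ b' := fun h => by rw [h] at h2; exact lt_irrefl _ h2
    have hac : a' ≠ c' := fun h => by rw [h] at h1; linarith
    rcases hsign a' ha b' hb c' hc hab hcb hac h1 h2 with ⟨hs, hr⟩ | ⟨hs, hr⟩
    · obtain ⟨ε, hε0, hεc, hεB⟩ := hBslots (b', w1) (hslotmem b' hb).1
      exact ⟨b' + ε • w1, hεB,
        hcprop (b', w1) ε hε0 hεc a' ha c' hc hb hab hcb hac hs hr⟩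
    · obtain ⟨hs2, hr2⟩ := hδ2 a' ha b' hb c' hc hs hr
      obtain ⟨ε, hε0, hεc, hεB⟩ := hBslots (b', w2) (hslotmem b' hb).2
      exact ⟨b' + ε • w2, hεB,
        hcprop (b', w2) ε hε0 hεc a' ha c' hc hb hab hcb hac hs2 hr2⟩
  refine ⟨B, by rw [← hLlen]; exact hBcard, hBdisj, hBgp, ?_⟩
  intro a ha b hb c hc hab hac hbc
  have hfab : a.1 + t * a.2 ≠ b.1 + t * b.2 :=
    fun h => ht a ha b hb hab (by linear_combination -h)
  have hfac : a.1 + t * a.2 ≠ c.1 + t * c.2 :=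
    fun h => ht a ha c hc hac (by linear_combination -h)
  have hfbc : b.1 + t * b.2 ≠ c.1 + t * c.2 :=
    fun h => ht b hb c hc hbc (by linear_combination -h)
  rcases lt_or_gt_of_ne hfab with h1 | h1 <;>
    rcases lt_or_gt_of_ne hfac with h2 | h2 <;>
      rcases lt_or_gt_of_ne hfbc with h3 | h3
  · exact main a ha b hb c hc h1 h3
  · obtain ⟨x, hx, hx2⟩ := main a ha c hc b hb h2 h3
    refine ⟨x, hx, ?_⟩
    have hset : ({a, b, c} : Set (ℝ × ℝ)) = {a, c, b} := by ext u; simp; tauto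
    rw [hset]; exact hx2
  · linarith
  · obtain ⟨x, hx, hx2⟩ := main c hc a ha b hb h2 h1
    refine ⟨x, hx, ?_⟩
    have hset : ({a, b, c} : Set (ℝ × ℝ)) = {c, a, b} := by ext u; simp; tauto
    rw [hset]; exact hx2
  · obtain ⟨x, hx, hx2⟩ := main b hb a ha c hc h1 h2
    refine ⟨x, hx, ?_⟩
    have hset : ({a, b, c} : Set (ℝ × ℝ)) = {b, a, c} := by ext u; simp; tauto
    rw [hset]; exact hx2
  · linarith
  · obtain ⟨x, hx, hx2⟩ := main b hb c hc a ha h3 h2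
    refine ⟨x, hx, ?_⟩
    have hset : ({a, b, c} : Set (ℝ × ℝ)) = {b, c, a} := by ext u; simp; tauto
    rw [hset]; exact hx2
  · obtain ⟨x, hx, hx2⟩ := main c hc b hb a ha h3 h1
    refine ⟨x, hx, ?_⟩
    have hset : ({a, b, c} : Set (ℝ × ℝ)) = {c, b, a} := by ext u; simp; tauto
    rw [hset]; exact hx2
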